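/- Let k ≥ 3 be an odd integer. Every cocircuit of the matroid N_k^L / {e_1, e_2} has at least 4 elements. -/

import Mathlib

open Set

namespace Matroid

variable {α : Type}

/-- Deletion of a set from a matroid. -/
def delete' (M : Matroid α) (D : Set α) : Matroid α := M ↾ (M.E \ D)

/-- Contraction of a set in a matroid. -/
def contract' (M : Matroid α) (C : Set α) : Matroid α := (M✶.delete' C)✶

/-- A circuit: a minimal dependent set. -/
def IsCircuit' (M : Matroid α) (C : Set α) : Prop :=
  M.Dep C ∧ ∀ D, D ⊂ C → M.Indep D

/-- A cocircuit: a circuit of the dual. -/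
def IsCocircuit' (M : Matroid α) (C : Set α) : Prop := M✶.IsCircuit' C

/-- A hyperplane: a flat whose rank is one less than the rank of the matroid. -/
def IsHyperplane (M : Matroid α) (H : Set α) : Prop :=
  M.IsFlat H ∧ ∃ I B, M.IsBasis I H ∧ M.IsBase B ∧ I.encard + 1 = B.encard

/-- A circuit-hyperplane: a set that is both a circuit and a hyperplane. -/
def IsCircuitHyperplane (M : Matroid α) (C : Set α) : Prop :=
  M.IsCircuit' C ∧ M.IsHyperplane C

/-- A free basis: a basis `B` such that `B ∪ {e}` is a circuit for every `e ∈ E(M) - B`. -/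
def IsFreeBase (M : Matroid α) (B : Set α) : Prop :=
  M.IsBase B ∧ ∀ e ∈ M.E \ B, M.IsCircuit' (insert e B)

/-- A connected matroid: the ground set is nonempty and every two distinct elements of the
ground set lie in a common circuit. -/
def IsConnected (M : Matroid α) : Prop :=
  M.E.Nonempty ∧ ∀ x ∈ M.E, ∀ y ∈ M.E, x ≠ y → ∃ C, M.IsCircuit' C ∧ x ∈ C ∧ y ∈ C

/-- `M` is a frame matroid: there is a matroid `M'` whose ground set is the union of (a copy of)
`E(M)` and a set `V` disjoint from it, such that `V` is a basis of `M'`, deleting `V` from `M'`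
yields (the copy of) `M`, and for every `e ∈ E(M)` the unique circuit of `M'` contained in
`V ∪ {e}` has at most three elements. -/
def IsFrame (M : Matroid α) : Prop :=
  ∃ (β : Type) (M' : Matroid (α ⊕ β)) (V : Set (α ⊕ β)),
    M'.Finite ∧
    M'.E = (Sum.inl '' M.E) ∪ V ∧
    Disjoint (Sum.inl '' M.E) V ∧
    M'.IsBase V ∧
    M'.delete' V = M.map Sum.inl Sum.inl_injective.injOn ∧
    ∀ e ∈ M.E, ∃ C, M'.IsCircuit' C ∧ C ⊆ insert (Sum.inl e) V ∧ C.encard ≤ 3 ∧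
      ∀ C', M'.IsCircuit' C' → C' ⊆ insert (Sum.inl e) V → C' = C

/-- `N` is a graphic matroid: there are a set `W` of vertices and an assignment of an unordered
pair of vertices to each element of the ground set, such that a subset `I` of the ground set is
independent exactly when every nonempty `J ⊆ I` uses strictly more vertices than it has edges
(i.e. the associated multigraph is a forest). -/
def IsGraphic (N : Matroid α) : Prop :=
  ∃ (W : Type) (f : α → Sym2 W),
    ∀ I : Set α, N.Indep I ↔ (I ⊆ N.E ∧ ∀ J ⊆ I, J.Nonempty →
      J.encard < {w : W | ∃ e ∈ J, w ∈ f e}.encard)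

/-- `M` is a lifted-graphic matroid: there is a matroid `M'` whose ground set is (a copy of)
`E(M)` plus one extra element `f`, such that `M' \ f = M` and `M' / f` is graphic. -/
def IsLiftedGraphic (M : Matroid α) : Prop :=
  ∃ M' : Matroid (α ⊕ Unit),
    M'.Finite ∧
    M'.E = (Sum.inl '' M.E) ∪ {Sum.inr ()} ∧
    M'.delete' {Sum.inr ()} = M.map Sum.inl Sum.inl_injective.injOn ∧
    (M'.contract' {Sum.inr ()}).IsGraphic

/-- `M` and `N` are isomorphic matroids. -/
def Iso' {β : Type} (M : Matroid α) (N : Matroid β) : Prop :=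
  ∃ (f : α → β) (hf : Set.InjOn f M.E), M.map f hf = N

end Matroid

section Graphs

/-- The edges of the graph `G_k`: `a i`, `b i`, `c i`, `d i` for `i : Fin k`
(with `i` representing the index `i+1` of the paper), together with `e1` and `e2`. -/
inductive Edge (k : ℕ) : Type where
  | a : Fin k → Edge k
  | b : Fin k → Edge k
  | c : Fin k → Edge k
  | d : Fin k → Edge k
  | e1 : Edge k
  | e2 : Edge k
deriving DecidableEq

/-- The vertices of `G_k`: `Sum.inl (i, false)` is `x_{i+1}` (so `Sum.inl (0, false)` is `s_1`),
`Sum.inl (i, true)` is `y_{i+1}` (so `Sum.inl (0, true)` is `s_2`), `Sum.inr false` is `t_1` and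
`Sum.inr true` is `t_2`.  There are `2k+2` vertices in all. -/
abbrev Vertex (k : ℕ) := (Fin k × Bool) ⊕ Bool

variable {k : ℕ}

/-- The tail of each edge of `G_k`. -/
def Edge.tail [NeZero k] : Edge k → Vertex k
  | .a i => .inl (i, false)
  | .b i => .inl (i, false)
  | .c i => .inl (i, true)
  | .d i => .inl (i, true)
  | .e1 => .inl (0, false)
  | .e2 => .inl (0, true)

/-- The head of each edge of `G_k`; the head `x_1` is the vertex `t_1 = Sum.inr false` and
the head `y_1` is the vertex `t_2 = Sum.inr true`. -/
def Edge.head [NeZero k] : Edge k → Vertex k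
  | .a i => if i + 1 = 0 then .inr false else .inl (i + 1, false)
  | .b i => if i + 1 = 0 then .inr true else .inl (i + 1, true)
  | .c i => if i + 1 = 0 then .inr false else .inl (i + 1, false)
  | .d i => if i + 1 = 0 then .inr true else .inl (i + 1, true)
  | .e1 => .inr false
  | .e2 => .inr true

/-- The set `P = {a_1, …, a_k, d_1, …, d_k}`. -/
def Pset (k : ℕ) : Set (Edge k) := {e | ∃ i, e = .a i ∨ e = .d i}

/-- The set `Q = {b_1, …, b_k, c_1, …, c_k}`. -/
def Qset (k : ℕ) : Set (Edge k) := {e | ∃ i, e = .b i ∨ e = .c i}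

/-- The last index of `Fin k`, representing the paper's index `k`. -/
def lastIdx (k : ℕ) [NeZero k] : Fin k :=
  ⟨k - 1, Nat.sub_lt (Nat.pos_of_ne_zero (NeZero.ne k)) Nat.one_pos⟩

/-- The group labels for the frame construction: `γ(a_k) = γ(b_k) = γ(c_k) = γ(d_k) = 2` and
`γ(e) = 1` for every other edge. -/
def gammaF [NeZero k] : Edge k → ℝ
  | .a i => if i = lastIdx k then 2 else 1
  | .b i => if i = lastIdx k then 2 else 1
  | .c i => if i = lastIdx k then 2 else 1
  | .d i => if i = lastIdx k then 2 else 1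
  | .e1 => 1
  | .e2 => 1

/-- The matrix `A_k` of the frame construction, with rows indexed by the vertices of `G_k` and
columns by its edges: the column of an edge `e` has entry `1` in the row of the tail of `e`,
entry `-γ(e)` in the row of the head of `e`, and `0` elsewhere. -/
def frameMatrix (k : ℕ) [NeZero k] : Matrix (Vertex k) (Edge k) ℝ :=
  fun v e => if v = e.tail then 1 else if v = e.head then -gammaF e else 0

/-- The group labels for the lifted construction: `γ(a_i) = γ(d_i) = 1` for all `i` and
`γ(e) = 0` for every other edge. -/
def gammaL : Edge k → ℝ
  | .a _ => 1
  | .d _ => 1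
  | _ => 0

/-- The matrix `A_k^L` of the lifted construction, with rows indexed by the vertices of `G_k`
together with one additional row: the column of an edge `e` has entry `1` in the row of the tail
of `e`, entry `-1` in the row of the head of `e`, entry `γ(e)` in the additional row, and `0`
elsewhere. -/
def liftMatrix (k : ℕ) [NeZero k] : Matrix (Vertex k ⊕ Unit) (Edge k) ℝ :=
  fun v e => match v with
  | .inl v => if v = e.tail then 1 else if v = e.head then -1 else 0
  | .inr _ => gammaL e

/-- `N` is the matroid on the column index set of the matrix `A` in which a set is independent
if and only if the corresponding columns of `A` are linearly independent over `ℝ`. -/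
def IsColMatroid {m n : Type} (A : Matrix m n ℝ) (N : Matroid n) : Prop :=
  N.E = Set.univ ∧
  ∀ I : Set n, N.Indep I ↔ LinearIndependent ℝ (fun e : I => fun v : m => A v (e : n))

/-- The vertex of the contracted graph `G_k / {e_1, e_2}` corresponding to a vertex of `G_k`:
`t_1` is identified with `s_1` and `t_2` with `s_2`, leaving the `2k` vertices `Fin k × Bool`. -/
def contractVertex [NeZero k] : Vertex k → Fin k × Bool
  | .inl p => p
  | .inr b => (0, b)

/-- The tail, in `G_k / {e_1, e_2}`, of an edge. -/
def Edge.ctail [NeZero k] (e : Edge k) : Fin k × Bool := contractVertex e.tail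

/-- The head, in `G_k / {e_1, e_2}`, of an edge. -/
def Edge.chead [NeZero k] (e : Edge k) : Fin k × Bool := contractVertex e.head

/-- `v` is a vertex of the subgraph of `G_k / {e_1, e_2}` formed by the edge set `S`. -/
def Touches [NeZero k] (S : Set (Edge k)) (v : Fin k × Bool) : Prop :=
  ∃ e ∈ S, e.ctail = v ∨ e.chead = v

/-- The degree of the vertex `v` in the subgraph of `G_k / {e_1, e_2}` with edge set `S`. -/
noncomputable def degreeIn [NeZero k] (S : Set (Edge k)) (v : Fin k × Bool) : ℕ :=
  {e ∈ S | e.ctail = v}.ncard + {e ∈ S | e.chead = v}.ncard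

/-- The edge set `S` forms a cycle of the multigraph `G_k / {e_1, e_2}`: the subgraph it
spans is connected and `2`-regular. -/
def IsCycleIn [NeZero k] (S : Set (Edge k)) : Prop :=
  S.Nonempty ∧ Edge.e1 ∉ S ∧ Edge.e2 ∉ S ∧
  (∀ v, Touches S v → degreeIn S v = 2) ∧
  (∀ T ⊆ S, T.Nonempty → (S \ T).Nonempty → ∃ v, Touches T v ∧ Touches (S \ T) v)

/-- The star `δ_G(v)` of a vertex `v` of the contracted graph `G_k / {e_1, e_2}`:
all edges of that graph incident with `v`. -/
def contractStar (k : ℕ) [NeZero k] (v : Fin k × Bool) : Set (Edge k) :=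
  {e | e ≠ .e1 ∧ e ≠ .e2 ∧ (e.ctail = v ∨ e.chead = v)}

/-- The star `δ(v)` of a vertex `v` of the graph `G_k`: all edges of `G_k` incident with `v`. -/
def star (k : ℕ) [NeZero k] (v : Vertex k) : Set (Edge k) :=
  {e | e.tail = v ∨ e.head = v}

end Graphs

section Aux

open Fin.NatCast Fin.CommRing

variable {k : ℕ}

lemma fin_natCast_ne_zero [NeZero k] {m : ℕ} (hm : m < k) (hm0 : m ≠ 0) : ((m : Fin k)) ≠ 0 := by
  intro h
  have := congrArg Fin.val h
  rw [Fin.val_natCast, Nat.mod_eq_of_lt hm] at this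
  simp at this
  exact hm0 this

lemma fin_add_one_ne [NeZero k] (hk : 2 ≤ k) (i : Fin k) : i + 1 ≠ i := by
  intro h
  have h1 : (1 : Fin k) = ((1 : ℕ) : Fin k) := by norm_cast
  have : i + 1 - i = i - i := by rw [h]
  rw [add_sub_cancel_left, sub_self] at this
  rw [h1] at this
  exact fin_natCast_ne_zero (by omega) (by omega) this

lemma path_lemma [NeZero k] (hk : 2 ≤ k) (u v : Fin k → ℝ) (L : Fin k)
    (hP : ∀ i, i ≠ L → u (i + 1) = u i ∧ v i = u i ∧ v (i + 1) = u i) :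
    ∀ i, u i = u 0 ∧ v i = u 0 := by
  have hstep : ∀ n : ℕ, n < k → u (L + 1 + (n : Fin k)) = u (L + 1) ∧
      v (L + 1 + (n : Fin k)) = u (L + 1) := by
    intro n
    induction n with
    | zero =>
      intro _
      have hne : L + 1 ≠ L := fin_add_one_ne hk L
      refine ⟨by simp, ?_⟩
      simpa using (hP (L + 1) hne).2.1
    | succ n ih =>
      intro hn
      have hn' : n < k := by omega
      obtain ⟨hu, hv⟩ := ih hn'
      have hne : L + 1 + (n : Fin k) ≠ L := by
        intro h
        have : (1 : Fin k) + (n : Fin k) = 0 := by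
          calc (1 : Fin k) + (n : Fin k) = L + 1 + (n : Fin k) - L := by ring
            _ = L - L := by rw [h]
            _ = 0 := sub_self L
        rw [show (1 : Fin k) = ((1:ℕ) : Fin k) by norm_cast, ← Nat.cast_add] at this
        exact fin_natCast_ne_zero (by omega) (by omega) this
      obtain ⟨h1, _, h3⟩ := hP _ hne
      have hcast : ((n + 1 : ℕ) : Fin k) = (n : Fin k) + 1 := by push_cast; ring
      rw [hcast, ← add_assoc]
      exact ⟨by rw [h1, hu], by rw [h3, hu]⟩
  have hall : ∀ i, u i = u (L + 1) ∧ v i = u (L + 1) := by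
    intro i
    have hlt : (i - (L + 1)).val < k := (i - (L + 1)).isLt
    have : L + 1 + ((i - (L + 1)).val : Fin k) = i := by
      rw [Fin.cast_val_eq_self]
      ring
    have h := hstep (i - (L + 1)).val hlt
    rw [this] at h
    exact h
  intro i
  rw [(hall i).1, (hall i).2, (hall 0).1]
  simp


variable {k : ℕ}

/-- level (index) of an edge -/
def Edge.lvl [NeZero k] : Edge k → Fin k
  | .a i => i
  | .b i => i
  | .c i => i
  | .d i => i
  | .e1 => 0
  | .e2 => 0

lemma encard_ge_four {α : Type} {C : Set α} {a b c d : α}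
    (ha : a ∈ C) (hb : b ∈ C) (hc : c ∈ C) (hd : d ∈ C)
    (hab : a ≠ b) (hac : a ≠ c) (had : a ≠ d) (hbc : b ≠ c) (hbd : b ≠ d) (hcd : c ≠ d) :
    4 ≤ C.encard := by
  have hsub : ({a, b, c, d} : Set α) ⊆ C := by
    intro x hx
    rcases hx with rfl | rfl | rfl | rfl <;> assumption
  have h4 : ({a, b, c, d} : Set α).encard = 4 := by
    rw [Set.encard_insert_of_notMem (by simp [hab, hac, had]),
      Set.encard_insert_of_notMem (by simp [hbc, hbd]), Set.encard_pair hcd]; rfl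
  calc (4 : ℕ∞) = ({a, b, c, d} : Set α).encard := h4.symm
    _ ≤ C.encard := Set.encard_mono hsub



end Aux

section Core
variable {k : ℕ} [NeZero k]
open Fin.NatCast Fin.CommRing

/-- `TwoAt C i`: at least two removed edges at level `i`. -/
def TwoAt (C : Set (Edge k)) (i : Fin k) : Prop :=
  ∃ e ∈ C, ∃ e' ∈ C, e ≠ e' ∧ Edge.lvl e = i ∧ Edge.lvl e' = i

lemma level_cases {C : Set (Edge k)} {i : Fin k} (hT : ¬ TwoAt C i) :
    (Edge.a i ∉ C ∧ Edge.b i ∉ C ∧ Edge.c i ∉ C) ∨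
    (Edge.a i ∉ C ∧ Edge.b i ∉ C ∧ Edge.d i ∉ C) ∨
    (Edge.a i ∉ C ∧ Edge.c i ∉ C ∧ Edge.d i ∉ C) ∨
    (Edge.b i ∉ C ∧ Edge.c i ∉ C ∧ Edge.d i ∉ C) := by
  have pair : ∀ e e', e ∈ C → e' ∈ C → e ≠ e' →
      Edge.lvl e = i → Edge.lvl e' = i → False :=
    fun e e' h1 h2 h3 h4 h5 => hT ⟨e, h1, e', h2, h3, h4, h5⟩
  by_cases ha : Edge.a i ∈ C
  · refine Or.inr (Or.inr (Or.inr ⟨?_, ?_, ?_⟩)) <;> intro h <;>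
      exact pair _ _ ha h (by simp) rfl rfl
  · by_cases hb : Edge.b i ∈ C
    · refine Or.inr (Or.inr (Or.inl ⟨ha, ?_, ?_⟩)) <;> intro h <;>
        exact pair _ _ hb h (by simp) rfl rfl
    · by_cases hc : Edge.c i ∈ C
      · refine Or.inr (Or.inl ⟨ha, hb, ?_⟩)
        intro h; exact pair _ _ hc h (by simp) rfl rfl
      · exact Or.inl ⟨ha, hb, hc⟩

lemma core (hk : 3 ≤ k) (C : Set (Edge k)) (hcard : C.encard ≤ 3)
    (u v : Fin k → ℝ) (t : ℝ)
    (hA : ∀ i, Edge.a i ∉ C → u (i + 1) = u i + t)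
    (hB : ∀ i, Edge.b i ∉ C → v (i + 1) = u i)
    (hC : ∀ i, Edge.c i ∉ C → u (i + 1) = v i)
    (hD : ∀ i, Edge.d i ∉ C → v (i + 1) = v i + t) :
    t = 0 ∧ ∀ i, u i = u 0 ∧ v i = u 0 := by
  have htwo_unique : ∀ i j : Fin k, TwoAt C i → TwoAt C j → i = j := by
    rintro i j ⟨e, he, e', he', hee, hei, hei'⟩ ⟨f, hf, f', hf', hff, hfj, hfj'⟩
    by_contra hij
    have hef : e ≠ f := fun h => hij (by rw [← hei, h, hfj])
    have hef' : e ≠ f' := fun h => hij (by rw [← hei, h, hfj'])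
    have he'f : e' ≠ f := fun h => hij (by rw [← hei', h, hfj])
    have he'f' : e' ≠ f' := fun h => hij (by rw [← hei', h, hfj'])
    exact absurd (le_trans (encard_ge_four he he' hf hf' hee hef hef' he'f he'f' hff) hcard)
      (by norm_num)
  obtain ⟨L, hL⟩ : ∃ L : Fin k, ∀ i, i ≠ L → ¬ TwoAt C i := by
    by_cases h : ∃ L, TwoAt C L
    · obtain ⟨L, hL⟩ := h
      exact ⟨L, fun i hi hTi => hi (htwo_unique i L hTi hL)⟩
    · push_neg at h
      exact ⟨0, fun i _ => h i⟩
  have ht : t = 0 := by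
    by_cases hfull : ∃ i, Edge.a i ∉ C ∧ Edge.b i ∉ C ∧ Edge.c i ∉ C ∧ Edge.d i ∉ C
    · obtain ⟨i, h1, h2, h3, h4⟩ := hfull
      have e1 := hA i h1; have e2 := hB i h2; have e3 := hC i h3; have e4 := hD i h4
      linarith
    · have hhit : ∀ i, Edge.a i ∈ C ∨ Edge.b i ∈ C ∨ Edge.c i ∈ C ∨ Edge.d i ∈ C := by
        intro i; by_contra h; push_neg at h
        exact hfull ⟨i, h.1, h.2.1, h.2.2.1, h.2.2.2⟩
      have hhit' : ∀ i, ∃ f ∈ C, Edge.lvl f = i := by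
        intro i
        rcases hhit i with h | h | h | h
        exacts [⟨_, h, rfl⟩, ⟨_, h, rfl⟩, ⟨_, h, rfl⟩, ⟨_, h, rfl⟩]
      have hk3' : k = 3 := by
        have hk3 : (k : ℕ∞) ≤ 3 := by
          calc (k : ℕ∞) = (Set.univ : Set (Fin k)).encard := by rw [Set.encard_univ]; simp
            _ ≤ (Edge.lvl '' C).encard :=
                Set.encard_mono (fun i _ => hhit' i)
            _ ≤ C.encard := Set.encard_image_le _ _
            _ ≤ 3 := hcard
        have : (k : ℕ) ≤ 3 := by exact_mod_cast hk3
        omega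
      have dgen1 : ∀ j : Fin k, j + 1 ≠ j := fin_add_one_ne (by omega)
      have dgen2 : ∀ j : Fin k, j + 2 ≠ j := by
        have h0 : ((2 : ℕ) : Fin k) ≠ 0 := fin_natCast_ne_zero (by omega) (by omega)
        have h2 : ((2 : ℕ) : Fin k) = (2 : Fin k) := by norm_cast
        intro j h
        apply h0
        rw [h2]
        calc (2 : Fin k) = j + 2 - j := by ring
          _ = j - j := by rw [h]
          _ = 0 := sub_self j
      have dgen3 : ∀ j : Fin k, j + 1 ≠ j + 2 := by
        intro j h
        apply dgen1 (j + 1)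
        rw [show j + 2 = (j + 1) + 1 by rw [add_assoc, one_add_one_eq_two]] at h
        exact h.symm
      subst hk3'
      have hone : ∀ i, ¬ TwoAt C i := by
        rintro i ⟨e, he, e', he', hee, hei, hei'⟩
        obtain ⟨f1, hf1c, hf1l⟩ := hhit' (i + 1)
        obtain ⟨f2, hf2c, hf2l⟩ := hhit' (i + 2)
        have d1 := dgen1 i
        have d2 := dgen2 i
        have d3 := dgen3 i
        have n1 : e ≠ f1 := fun h => d1 (by rw [← hf1l, ← h, hei])
        have n2 : e ≠ f2 := fun h => d2 (by rw [← hf2l, ← h, hei])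
        have n3 : e' ≠ f1 := fun h => d1 (by rw [← hf1l, ← h, hei'])
        have n4 : e' ≠ f2 := fun h => d2 (by rw [← hf2l, ← h, hei'])
        have n5 : f1 ≠ f2 := fun h => d3 (by rw [← hf1l, ← hf2l, h])
        exact absurd (le_trans (encard_ge_four he he' hf1c hf2c hee n1 n2 n3 n4 n5) hcard)
          (by norm_num)
      have q : ∀ i : Fin 3, (u (i + 1) = u i + t ∧ v (i + 1) = u i ∧ u (i + 1) = v i) ∨
          (u (i + 1) = u i + t ∧ v (i + 1) = u i ∧ v (i + 1) = v i + t) ∨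
          (u (i + 1) = u i + t ∧ u (i + 1) = v i ∧ v (i + 1) = v i + t) ∨
          (v (i + 1) = u i ∧ u (i + 1) = v i ∧ v (i + 1) = v i + t) := by
        intro i
        rcases level_cases (hone i) with ⟨h1, h2, h3⟩ | ⟨h1, h2, h3⟩ | ⟨h1, h2, h3⟩ | ⟨h1, h2, h3⟩
        · exact Or.inl ⟨hA i h1, hB i h2, hC i h3⟩
        · exact Or.inr (Or.inl ⟨hA i h1, hB i h2, hD i h3⟩)
        · exact Or.inr (Or.inr (Or.inl ⟨hA i h1, hC i h2, hD i h3⟩))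
        · exact Or.inr (Or.inr (Or.inr ⟨hB i h1, hC i h2, hD i h3⟩))
      have e01 : (0 : Fin 3) + 1 = 1 := rfl
      have e12 : (1 : Fin 3) + 1 = 2 := rfl
      have e20 : (2 : Fin 3) + 1 = 0 := rfl
      have q0 := q 0; rw [e01] at q0
      have q1 := q 1; rw [e12] at q1
      have q2 := q 2; rw [e20] at q2
      rcases q0 with ⟨x1, x2, x3⟩ | ⟨x1, x2, x3⟩ | ⟨x1, x2, x3⟩ | ⟨x1, x2, x3⟩ <;>
        rcases q1 with ⟨y1, y2, y3⟩ | ⟨y1, y2, y3⟩ | ⟨y1, y2, y3⟩ | ⟨y1, y2, y3⟩ <;>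
        rcases q2 with ⟨z1, z2, z3⟩ | ⟨z1, z2, z3⟩ | ⟨z1, z2, z3⟩ | ⟨z1, z2, z3⟩ <;>
        linarith
  refine ⟨ht, ?_⟩
  have hP : ∀ i, i ≠ L → u (i + 1) = u i ∧ v i = u i ∧ v (i + 1) = u i := by
    intro i hi
    rcases level_cases (hL i hi) with ⟨h1, h2, h3⟩ | ⟨h1, h2, h3⟩ | ⟨h1, h2, h3⟩ | ⟨h1, h2, h3⟩
    · have e1 := hA i h1; have e2 := hB i h2; have e3 := hC i h3
      exact ⟨by linarith, by linarith, by linarith⟩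
    · have e1 := hA i h1; have e2 := hB i h2; have e3 := hD i h3
      exact ⟨by linarith, by linarith, by linarith⟩
    · have e1 := hA i h1; have e2 := hC i h2; have e3 := hD i h3
      exact ⟨by linarith, by linarith, by linarith⟩
    · have e1 := hB i h1; have e2 := hC i h2; have e3 := hD i h3
      exact ⟨by linarith, by linarith, by linarith⟩
  exact path_lemma (by omega) u v L hP

end Core


section MatrixAux

variable {k : ℕ}

/-- The column of the lift matrix corresponding to an edge. -/
def gcol (k : ℕ) [NeZero k] (e : Edge k) : (Vertex k ⊕ Unit) → ℝ :=
  fun r => liftMatrix k r e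

lemma tail_ne_head [NeZero k] (hk : 3 ≤ k) (e : Edge k) : e.tail ≠ e.head := by
  have hne : ∀ i : Fin k, i ≠ i + 1 := fun i h => fin_add_one_ne (by omega) i h.symm
  cases e with
  | a i => by_cases h : i + 1 = 0 <;> simp [Edge.tail, Edge.head, h, hne i]
  | b i => by_cases h : i + 1 = 0 <;> simp [Edge.tail, Edge.head, h, hne i]
  | c i => by_cases h : i + 1 = 0 <;> simp [Edge.tail, Edge.head, h, hne i]
  | d i => by_cases h : i + 1 = 0 <;> simp [Edge.tail, Edge.head, h, hne i]
  | e1 => simp [Edge.tail, Edge.head]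
  | e2 => simp [Edge.tail, Edge.head]

lemma col_eq [NeZero k] (hk : 3 ≤ k) (e : Edge k) :
    gcol k e = (Pi.single (Sum.inl e.tail) (1 : ℝ) : (Vertex k ⊕ Unit) → ℝ)
      - (Pi.single (Sum.inl e.head) (1 : ℝ) : (Vertex k ⊕ Unit) → ℝ)
      + gammaL e • (Pi.single (Sum.inr ()) (1 : ℝ) : (Vertex k ⊕ Unit) → ℝ) := by
  have hth := tail_ne_head hk e
  funext r
  simp only [Pi.add_apply, Pi.sub_apply, Pi.smul_apply, smul_eq_mul]
  rcases r with w | un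
  · by_cases h1 : w = e.tail
    · subst h1
      simp [gcol, liftMatrix, Pi.single_apply, hth]
    · by_cases h2 : w = e.head
      · subst h2
        simp [gcol, liftMatrix, Pi.single_apply, Ne.symm hth, h1]
      · simp [gcol, liftMatrix, Pi.single_apply, h1, h2]
  · simp [gcol, liftMatrix, Pi.single_apply]

lemma gcol_tail {e e' : Edge k} [NeZero k] (hk : 3 ≤ k) (h : gcol k e = gcol k e') :
    e.tail = e'.tail := by
  have h1 := congrFun h (Sum.inl e'.tail)
  have h2 : gcol k e' (Sum.inl e'.tail) = 1 := by simp [gcol, liftMatrix]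
  rw [h2] at h1
  simp only [gcol, liftMatrix] at h1
  split_ifs at h1 with hA hB
  · exact hA.symm
  · norm_num at h1
  · norm_num at h1

lemma gcol_head {e e' : Edge k} [NeZero k] (hk : 3 ≤ k) (h : gcol k e = gcol k e') :
    e.head = e'.head := by
  have h1 := congrFun h (Sum.inl e'.head)
  have h2 : gcol k e' (Sum.inl e'.head) = -1 := by
    simp [gcol, liftMatrix, Ne.symm (tail_ne_head hk e')]
  rw [h2] at h1
  simp only [gcol, liftMatrix] at h1
  split_ifs at h1 with hA hB
  · norm_num at h1
  · exact hB.symm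
  · norm_num at h1

lemma gcol_inj [NeZero k] (hk : 3 ≤ k) : Function.Injective (gcol k) := by
  intro e e' h
  have t1 := gcol_tail hk h
  have t2 := gcol_head hk h
  have t3 : gammaL e = gammaL e' := congrFun h (Sum.inr ())
  cases e <;> cases e' <;>
    simp only [Edge.tail, Edge.head, gammaL] at t1 t2 t3 <;>
    first
      | rfl
      | (simp at t1; done)
      | (simp at t1; subst t1; rfl)
      | (norm_num at t3; done)
      | (split_ifs at t2 <;> simp at t2) <;> done

lemma ctail_a [NeZero k] (i : Fin k) : (Edge.a i).ctail = (i, false) := rfl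
lemma ctail_b [NeZero k] (i : Fin k) : (Edge.b i).ctail = (i, false) := rfl
lemma ctail_c [NeZero k] (i : Fin k) : (Edge.c i).ctail = (i, true) := rfl
lemma ctail_d [NeZero k] (i : Fin k) : (Edge.d i).ctail = (i, true) := rfl

lemma chead_a [NeZero k] (i : Fin k) : (Edge.a i).chead = (i + 1, false) := by
  by_cases h : i + 1 = 0 <;> simp [Edge.chead, Edge.head, contractVertex, h]
lemma chead_b [NeZero k] (i : Fin k) : (Edge.b i).chead = (i + 1, true) := by
  by_cases h : i + 1 = 0 <;> simp [Edge.chead, Edge.head, contractVertex, h]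
lemma chead_c [NeZero k] (i : Fin k) : (Edge.c i).chead = (i + 1, false) := by
  by_cases h : i + 1 = 0 <;> simp [Edge.chead, Edge.head, contractVertex, h]
lemma chead_d [NeZero k] (i : Fin k) : (Edge.d i).chead = (i + 1, true) := by
  by_cases h : i + 1 = 0 <;> simp [Edge.chead, Edge.head, contractVertex, h]

lemma span_full [NeZero k] (hk : 3 ≤ k) (C : Set (Edge k)) (hcard : C.encard ≤ 3)
    (he1 : Edge.e1 ∉ C) (he2 : Edge.e2 ∉ C) (e0 : Edge k) :
    gcol k e0 ∈ Submodule.span ℝ (gcol k '' (Set.univ \ C)) := by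
  by_contra hnot
  obtain ⟨f, hf0, hfmap⟩ :=
    Submodule.exists_dual_map_eq_bot_of_notMem hnot inferInstance
  have hvan : ∀ e ∉ C, f (gcol k e) = 0 := by
    intro e he
    have hmem : gcol k e ∈ Submodule.span ℝ (gcol k '' (Set.univ \ C)) :=
      Submodule.subset_span ⟨e, ⟨trivial, he⟩, rfl⟩
    have := Submodule.mem_map_of_mem (f := f) hmem
    rw [hfmap] at this
    simpa using this
  have hval : ∀ e : Edge k, f (gcol k e) =
      f (Pi.single (Sum.inl e.tail) 1) - f (Pi.single (Sum.inl e.head) 1)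
        + gammaL e * f (Pi.single (Sum.inr ()) 1) := by
    intro e
    rw [col_eq hk e, map_add, map_sub, map_smul, smul_eq_mul]
  set G : Fin k × Bool → ℝ := fun p => f (Pi.single (Sum.inl (Sum.inl p : Vertex k)) 1) with hG
  set tv : ℝ := f (Pi.single (Sum.inr ()) 1) with htv
  have hw1 : f (Pi.single (Sum.inl (Sum.inr false : Vertex k)) 1) = G (0, false) := by
    have h := hvan Edge.e1 he1
    rw [hval] at h
    simp only [Edge.tail, Edge.head, gammaL] at h
    simp only [hG]
    linarith
  have hw2 : f (Pi.single (Sum.inl (Sum.inr true : Vertex k)) 1) = G (0, true) := by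
    have h := hvan Edge.e2 he2
    rw [hval] at h
    simp only [Edge.tail, Edge.head, gammaL] at h
    simp only [hG]
    linarith
  have hFc : ∀ w : Vertex k, f (Pi.single (Sum.inl w) 1) = G (contractVertex w) := by
    rintro (p | b)
    · rfl
    · cases b
      · exact hw1
      · exact hw2
  have hval' : ∀ e : Edge k, f (gcol k e) = G e.ctail - G e.chead + gammaL e * tv := by
    intro e
    rw [hval e, hFc, hFc]
    rfl
  have hcore := core hk C hcard (fun i => G (i, false)) (fun i => G (i, true)) tv
    (fun i hi => by
      have h := hvan _ hi
      rw [hval' (Edge.a i), ctail_a, chead_a] at h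
      simp only [gammaL] at h
      show G (i + 1, false) = G (i, false) + tv
      linarith)
    (fun i hi => by
      have h := hvan _ hi
      rw [hval' (Edge.b i), ctail_b, chead_b] at h
      simp only [gammaL] at h
      show G (i + 1, true) = G (i, false)
      linarith)
    (fun i hi => by
      have h := hvan _ hi
      rw [hval' (Edge.c i), ctail_c, chead_c] at h
      simp only [gammaL] at h
      show G (i + 1, false) = G (i, true)
      linarith)
    (fun i hi => by
      have h := hvan _ hi
      rw [hval' (Edge.d i), ctail_d, chead_d] at h
      simp only [gammaL] at h
      show G (i + 1, true) = G (i, true) + tv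
      linarith)
  obtain ⟨ht0, hconst⟩ := hcore
  have hGconst : ∀ p : Fin k × Bool, G p = G (0, false) := by
    rintro ⟨i, b⟩
    cases b
    · exact (hconst i).1
    · exact (hconst i).2
  apply hf0
  rw [hval' e0, hGconst e0.ctail, hGconst e0.chead, ht0]
  ring

end MatrixAux



open Matroid in
/-- Every cocircuit of `N_k^L / {e_1, e_2}` has at least `4` elements. -/
theorem cocircuits_of_NkL_contract_large (k : ℕ) [NeZero k] (hk : 3 ≤ k) (hodd : Odd k)
    (N : Matroid (Edge k)) (hN : IsColMatroid (liftMatrix k) N) :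
    ∀ C : Set (Edge k), (N.contract' {Edge.e1, Edge.e2}).IsCocircuit' C → 4 ≤ C.encard := by
  obtain ⟨hE, hInd⟩ := hN
  intro C hC
  by_contra hlt
  push_neg at hlt
  have hcard : C.encard ≤ 3 := by
    have h4 : (4 : ℕ∞) = 3 + 1 := by norm_num
    rw [h4] at hlt
    exact Order.le_of_lt_add_one hlt
  set X : Set (Edge k) := {Edge.e1, Edge.e2} with hX
  have hdual : (N.contract' X)✶ = N✶ ↾ (N✶.E \ X) := by
    unfold Matroid.contract' Matroid.delete'
    exact Matroid.dual_dual _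
  unfold Matroid.IsCocircuit' Matroid.IsCircuit' at hC
  obtain ⟨hdep, -⟩ := hC
  rw [hdual, Matroid.dep_iff] at hdep
  obtain ⟨hnind, hsubR⟩ := hdep
  rw [Matroid.restrict_ground_eq] at hsubR
  have he1 : Edge.e1 ∉ C := fun h => (hsubR h).2 (by simp [hX])
  have he2 : Edge.e2 ∉ C := fun h => (hsubR h).2 (by simp [hX])
  apply hnind
  rw [Matroid.restrict_indep_iff]
  refine ⟨?_, hsubR⟩
  rw [Matroid.dual_indep_iff_exists']
  refine ⟨by rw [hE]; exact Set.subset_univ C, ?_⟩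
  obtain ⟨s, hssub, hspan, hsli⟩ := exists_linearIndependent ℝ (gcol k '' (Set.univ \ C))
  set I : Set (Edge k) := (Set.univ \ C) ∩ gcol k ⁻¹' s with hIdef
  have hinj := gcol_inj (k := k) hk
  have hgI : gcol k '' I = s := by
    apply Set.Subset.antisymm
    · rintro x ⟨e, ⟨-, hpre⟩, rfl⟩
      exact hpre
    · intro x hx
      obtain ⟨e, he, rfl⟩ := hssub hx
      exact ⟨e, ⟨he, hx⟩, rfl⟩
  have hIli : N.Indep I := by
    rw [hInd]
    let φ : I → s := fun e => ⟨gcol k e, by rw [← hgI]; exact Set.mem_image_of_mem _ e.2⟩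
    have hφ : Function.Injective φ := by
      intro e e' h
      exact Subtype.ext (hinj (congrArg Subtype.val h))
    exact hsli.comp φ hφ
  have hmax : N.IsBase I := by
    rw [Matroid.isBase_iff_maximal_indep]
    refine ⟨hIli, fun J hJ hIJ => ?_⟩
    intro e heJ
    by_contra heI
    have hJli : LinearIndependent ℝ (fun j : J => gcol k (j : Edge k)) := (hInd J).mp hJ
    have hsp : gcol k e ∈ Submodule.span ℝ (gcol k '' I) := by
      rw [hgI, hspan]
      exact span_full hk C hcard he1 he2 e
    have hnot := hJli.notMem_span_image (s := {j : J | (j : Edge k) ∈ I})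
      (x := ⟨e, heJ⟩) (by simp [heI])
    apply hnot
    have himg : (fun j : J => gcol k (j : Edge k)) '' {j : J | (j : Edge k) ∈ I}
        = gcol k '' I := by
      ext x
      constructor
      · rintro ⟨j, hj, rfl⟩
        exact ⟨j, hj, rfl⟩
      · rintro ⟨e', he', rfl⟩
        exact ⟨⟨e', hIJ he'⟩, he', rfl⟩
    rw [himg]
    exact hsp
  exact ⟨I, hmax, Set.disjoint_left.mpr fun e heC heI => heI.1.2 heC⟩
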